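/- If M is a name-extended standard model for (Σ_c, Φ), then its term model M_T is a standard model for (Σ_c, Φ), i.e., each inductive predicate in M_T is interpreted as the least fixpoint of the operator for Φ over the term universe. -/

import Mathlib

/-! ### First-order logic with inductively defined predicates (FOL_ID) -/

/-- A first-order signature with ordinary and inductive predicate symbols. -/
structure Signature : Type 1 where
  Func : Type
  arF : Func → ℕ
  Pred : Type
  arP : Pred → ℕ
  IndPred : Type
  arI : IndPred → ℕ

/-- Terms over a signature. -/
inductive Tm (S : Signature) : Type
  | var : ℕ → Tm S
  | func (f : S.Func) : (Fin (S.arF f) → Tm S) → Tm S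

/-- Formulas of FOL_ID. -/
inductive Fm (S : Signature) : Type
  | fals : Fm S
  | eq : Tm S → Tm S → Fm S
  | pred (Q : S.Pred) : (Fin (S.arP Q) → Tm S) → Fm S
  | ind (P : S.IndPred) : (Fin (S.arI P) → Tm S) → Fm S
  | not : Fm S → Fm S
  | and : Fm S → Fm S → Fm S
  | or : Fm S → Fm S → Fm S
  | imp : Fm S → Fm S → Fm S
  | all : ℕ → Fm S → Fm S
  | ex : ℕ → Fm S → Fm S

/-- A first-order structure for a signature. -/
structure Struc (S : Signature) : Type 1 where
  U : Type
  interpF (f : S.Func) : (Fin (S.arF f) → U) → U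
  interpP (Q : S.Pred) : Set (Fin (S.arP Q) → U)
  interpI : Set ((P : S.IndPred) × (Fin (S.arI P) → U))

/-- Evaluation of terms. -/
def Tm.eval {S : Signature} (M : Struc S) (ρ : ℕ → M.U) : Tm S → M.U
  | .var n => ρ n
  | .func f ts => M.interpF f (fun i => (ts i).eval M ρ)

/-- Update of a variable assignment. -/
def update {α : Type} (ρ : ℕ → α) (n : ℕ) (a : α) : ℕ → α :=
  fun m => if m = n then a else ρ m

/-- Tarskian satisfaction. -/
def Sat {S : Signature} (M : Struc S) (ρ : ℕ → M.U) : Fm S → Prop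
  | .fals => False
  | .eq t u => t.eval M ρ = u.eval M ρ
  | .pred Q ts => (fun i => (ts i).eval M ρ) ∈ M.interpP Q
  | .ind P ts => ⟨P, fun i => (ts i).eval M ρ⟩ ∈ M.interpI
  | .not A => ¬ Sat M ρ A
  | .and A B => Sat M ρ A ∧ Sat M ρ B
  | .or A B => Sat M ρ A ∨ Sat M ρ B
  | .imp A B => Sat M ρ A → Sat M ρ B
  | .all n A => ∀ a : M.U, Sat M (update ρ n a) A
  | .ex n A => ∃ a : M.U, Sat M (update ρ n a) A

/-- Free variables of a term. -/
def Tm.fv {S : Signature} : Tm S → Finset ℕ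
  | .var n => {n}
  | .func _ ts => Finset.univ.biUnion (fun i => (ts i).fv)

/-- Free variables of a formula. -/
def Fm.fv {S : Signature} : Fm S → Finset ℕ
  | .fals => ∅
  | .eq t u => t.fv ∪ u.fv
  | .pred _ ts => Finset.univ.biUnion (fun i => (ts i).fv)
  | .ind _ ts => Finset.univ.biUnion (fun i => (ts i).fv)
  | .not A => A.fv
  | .and A B => A.fv ∪ B.fv
  | .or A B => A.fv ∪ B.fv
  | .imp A B => A.fv ∪ B.fv
  | .all n A => A.fv.erase n
  | .ex n A => A.fv.erase n

/-- Simultaneous substitution on terms. -/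
def Tm.subst {S : Signature} (σ : ℕ → Tm S) : Tm S → Tm S
  | .var n => σ n
  | .func f ts => .func f (fun i => (ts i).subst σ)

/-- Substitution of a (closed) term for a variable in a formula. -/
def Fm.substC {S : Signature} (x : ℕ) (t : Tm S) : Fm S → Fm S
  | .fals => .fals
  | .eq a b => .eq (a.subst (fun n => if n = x then t else .var n))
      (b.subst (fun n => if n = x then t else .var n))
  | .pred Q ts => .pred Q (fun i => (ts i).subst (fun n => if n = x then t else .var n))
  | .ind P ts => .ind P (fun i => (ts i).subst (fun n => if n = x then t else .var n))
  | .not A => .not (A.substC x t)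
  | .and A B => .and (A.substC x t) (B.substC x t)
  | .or A B => .or (A.substC x t) (B.substC x t)
  | .imp A B => .imp (A.substC x t) (B.substC x t)
  | .all n A => if n = x then .all n A else .all n (A.substC x t)
  | .ex n A => if n = x then .ex n A else .ex n (A.substC x t)

/-- A production rule for inductive predicates. -/
structure ProdRule (S : Signature) : Type where
  concl : S.IndPred
  conclArgs : Fin (S.arI concl) → Tm S
  ordPrems : List ((Q : S.Pred) × (Fin (S.arP Q) → Tm S))
  indPrems : List ((P : S.IndPred) × (Fin (S.arI P) → Tm S))

/-- The monotone operator determined by a set of production rules over a structure. -/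
def step {S : Signature} (M : Struc S) (Φ : List (ProdRule S))
    (X : Set ((P : S.IndPred) × (Fin (S.arI P) → M.U))) :
    Set ((P : S.IndPred) × (Fin (S.arI P) → M.U)) :=
  { v | ∃ r ∈ Φ, ∃ ρ : ℕ → M.U,
      (∀ q ∈ r.ordPrems, (fun i => (q.2 i).eval M ρ) ∈ M.interpP q.1) ∧
      (∀ p ∈ r.indPrems, ⟨p.1, fun i => (p.2 i).eval M ρ⟩ ∈ X) ∧
      v = ⟨r.concl, fun i => (r.conclArgs i).eval M ρ⟩ }

theorem step_mono {S : Signature} (M : Struc S) (Φ : List (ProdRule S)) :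
    Monotone (step M Φ) := by
  rintro X Y h v ⟨r, hr, ρ, hq, hp, hv⟩
  exact ⟨r, hr, ρ, hq, fun p hp' => h (hp p hp'), hv⟩

/-- The operator for the production rules, as an order homomorphism. -/
def stepHom {S : Signature} (M : Struc S) (Φ : List (ProdRule S)) :
    Set ((P : S.IndPred) × (Fin (S.arI P) → M.U)) →o
      Set ((P : S.IndPred) × (Fin (S.arI P) → M.U)) :=
  ⟨step M Φ, step_mono M Φ⟩

/-- A structure is a standard model for `(S, Φ)` if it interprets the inductive
predicates by the least fixpoint of the operator for `Φ`. -/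
def Standard {S : Signature} (M : Struc S) (Φ : List (ProdRule S)) : Prop :=
  M.interpI = OrderHom.lfp (stepHom M Φ)

/-- The variables occurring in a production rule. -/
def ProdRule.vars {S : Signature} (r : ProdRule S) : Finset ℕ :=
  (Finset.univ.biUnion fun i => (r.conclArgs i).fv) ∪
    (r.ordPrems.foldr (fun q s => s ∪ Finset.univ.biUnion fun i => (q.2 i).fv) ∅) ∪
    (r.indPrems.foldr (fun p s => s ∪ Finset.univ.biUnion fun i => (p.2 i).fv) ∅)

def bigAnd {S : Signature} : List (Fm S) → Fm S
  | [] => .not .fals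
  | A :: l => .and A (bigAnd l)

def bigOr {S : Signature} : List (Fm S) → Fm S
  | [] => .fals
  | A :: l => .or A (bigOr l)

def exList {S : Signature} : List ℕ → Fm S → Fm S
  | [], A => A
  | n :: l, A => .ex n (exList l A)

/-- The `k`-fold syntactic unfolding `P^{(k)}(t⃗)` of an inductive predicate:
`P^{(0)}(t⃗) ≡ ⊥` and `P^{(k+1)}(t⃗)` is the disjunction, over production rules with
conclusion `P t⃗₀`, of `∃y⃗ (t⃗ = t⃗₀ ∧ ⋀ Q_l u⃗_l ∧ ⋀ P_{j_p}^{(k)}(t⃗_p))`, with the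
rule variables `y⃗` renamed to be fresh for `t⃗`. -/
def unfold {S : Signature} [DecidableEq S.IndPred] (Φ : List (ProdRule S)) :
    ℕ → (P : S.IndPred) → (Fin (S.arI P) → Tm S) → Fm S
  | 0, _, _ => .fals
  | (k+1), P, ts =>
    bigOr (Φ.map fun r =>
      if h : r.concl = P then
        let N : ℕ := ((Finset.univ.biUnion fun i => (ts i).fv).sup id) + 1
        let σ : ℕ → Tm S := fun n => .var (n + N)
        exList ((r.vars.sort (· ≤ ·)).map (· + N))
          (.and (bigAnd ((List.finRange (S.arI P)).map fun i =>
              .eq (ts i) (((h ▸ r.conclArgs) i).subst σ)))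
            (.and (bigAnd (r.ordPrems.map fun q => .pred q.1 fun i => (q.2 i).subst σ))
              (bigAnd (r.indPrems.map fun p => unfold Φ k p.1 fun i => (p.2 i).subst σ))))
      else .fals)
/-! ### Name constants and term models -/

/-- The signature `Σ_c` extending `Σ` by countably many fresh name constants. -/
def Signature.addConsts (S : Signature) : Signature where
  Func := S.Func ⊕ ℕ
  arF := fun f => match f with
    | .inl f => S.arF f
    | .inr _ => 0
  Pred := S.Pred
  arP := S.arP
  IndPred := S.IndPred
  arI := S.arI

/-- Lifting of terms along `Σ ⊆ Σ_c`. -/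
def Tm.lift {S : Signature} : Tm S → Tm S.addConsts
  | .var n => .var n
  | .func f ts => .func (Sum.inl f) (fun i => (ts i).lift)

/-- Lifting of formulas along `Σ ⊆ Σ_c`. -/
def Fm.lift {S : Signature} : Fm S → Fm S.addConsts
  | .fals => .fals
  | .eq t u => .eq t.lift u.lift
  | .pred Q ts => .pred Q (fun i => (ts i).lift)
  | .ind P ts => .ind P (fun i => (ts i).lift)
  | .not A => .not A.lift
  | .and A B => .and A.lift B.lift
  | .or A B => .or A.lift B.lift
  | .imp A B => .imp A.lift B.lift
  | .all n A => .all n A.lift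
  | .ex n A => .ex n A.lift

/-- Lifting of production rules along `Σ ⊆ Σ_c`. -/
def ProdRule.lift {S : Signature} (r : ProdRule S) : ProdRule S.addConsts where
  concl := r.concl
  conclArgs := fun i => (r.conclArgs i).lift
  ordPrems := r.ordPrems.map fun q => ⟨q.1, fun i => (q.2 i).lift⟩
  indPrems := r.indPrems.map fun p => ⟨p.1, fun i => (p.2 i).lift⟩

/-- The name-extension `M_c` of a structure `M`, interpreting the `i`-th name
constant as `c i`. -/
def addConstsStruc {S : Signature} (M : Struc S) (c : ℕ → M.U) : Struc S.addConsts where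
  U := M.U
  interpF := fun f => match f with
    | .inl f => M.interpF f
    | .inr n => fun _ => c n
  interpP := M.interpP
  interpI := M.interpI

/-- A structure for `Σ_c` is name-extended if every element of its universe is the
interpretation of some name constant. -/
def NameExtended {S : Signature} (M : Struc S.addConsts) : Prop :=
  ∀ u : M.U, ∃ n : ℕ, M.interpF (Sum.inr n) (fun i => i.elim0) = u

/-- Closed terms of a signature. -/
def ClosedTm (S : Signature) : Type := {t : Tm S // t.fv = ∅}

/-- Application of a function symbol to closed terms. -/
def ClosedTm.func {S : Signature} (f : S.Func) (ts : Fin (S.arF f) → ClosedTm S) :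
    ClosedTm S :=
  ⟨.func f (fun i => (ts i).1), by
    have h : ∀ i, ((ts i).1).fv = ∅ := fun i => (ts i).2
    simp only [Tm.fv, h]
    ext n
    simp⟩

/-- The data of a term model: an equivalence relation on closed terms compatible with
the function symbols, together with interpretations of the predicate symbols on
closed terms that respect the relation. -/
structure TermModelData (S : Signature) : Type where
  rel : ClosedTm S → ClosedTm S → Prop
  equiv : Equivalence rel
  congrF : ∀ (f : S.Func) (ts us : Fin (S.arF f) → ClosedTm S),
    (∀ i, rel (ts i) (us i)) → rel (ClosedTm.func f ts) (ClosedTm.func f us)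
  interpP (Q : S.Pred) : Set (Fin (S.arP Q) → ClosedTm S)
  respP : ∀ (Q : S.Pred) (ts us : Fin (S.arP Q) → ClosedTm S),
    (∀ i, rel (ts i) (us i)) → (ts ∈ interpP Q ↔ us ∈ interpP Q)
  interpI : Set ((P : S.IndPred) × (Fin (S.arI P) → ClosedTm S))
  respI : ∀ (P : S.IndPred) (ts us : Fin (S.arI P) → ClosedTm S),
    (∀ i, rel (ts i) (us i)) → (⟨P, ts⟩ ∈ interpI ↔ ⟨P, us⟩ ∈ interpI)

def TermModelData.setoid {S : Signature} (D : TermModelData S) : Setoid (ClosedTm S) :=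
  ⟨D.rel, D.equiv⟩

/-- The term model determined by term-model data: its universe is the quotient of the
set of closed terms, constants and function symbols are interpreted syntactically on
equivalence classes. -/
noncomputable def TermModelData.toStruc {S : Signature} (D : TermModelData S) : Struc S where
  U := Quotient D.setoid
  interpF f args :=
    Quotient.mk D.setoid (ClosedTm.func f (fun i => (args i).out))
  interpP Q := { v | ∃ g : Fin (S.arP Q) → ClosedTm S,
      (∀ i, v i = Quotient.mk D.setoid (g i)) ∧ g ∈ D.interpP Q }
  interpI := { v | ∃ g : Fin (S.arI v.1) → ClosedTm S,
      (∀ i, v.2 i = Quotient.mk D.setoid (g i)) ∧ ⟨v.1, g⟩ ∈ D.interpI }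

/-- The term-model data canonically associated with a structure `M`: closed terms are
identified iff they have the same value in `M`, and predicates hold of closed terms
iff they hold of their values in `M`. -/
def Struc.termData {S : Signature} (M : Struc S) : TermModelData S where
  rel t u := ∀ ρ : ℕ → M.U, t.1.eval M ρ = u.1.eval M ρ
  equiv := ⟨fun _ _ => rfl, fun h ρ => (h ρ).symm, fun h h' ρ => (h ρ).trans (h' ρ)⟩
  congrF f ts us h := fun ρ => congrArg (M.interpF f) (funext fun i => h i ρ)
  interpP Q := { ts | ∀ ρ : ℕ → M.U, (fun i => (ts i).1.eval M ρ) ∈ M.interpP Q }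
  respP Q ts us h := by
    constructor <;> intro hm ρ <;> have := hm ρ
    · rwa [show (fun i => (us i).1.eval M ρ) = fun i => (ts i).1.eval M ρ from
        funext fun i => (h i ρ).symm]
    · rwa [show (fun i => (ts i).1.eval M ρ) = fun i => (us i).1.eval M ρ from
        funext fun i => h i ρ]
  interpI := { v | ∀ ρ : ℕ → M.U, (⟨v.1, fun i => (v.2 i).1.eval M ρ⟩ :
      (P : S.IndPred) × (Fin (S.arI P) → M.U)) ∈ M.interpI }
  respI P ts us h := by
    constructor <;> intro hm ρ <;> have := hm ρ
    · rwa [show (fun i => (us i).1.eval M ρ) = fun i => (ts i).1.eval M ρ from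
        funext fun i => (h i ρ).symm]
    · rwa [show (fun i => (ts i).1.eval M ρ) = fun i => (us i).1.eval M ρ from
        funext fun i => h i ρ]

/-- The term model `M_T` of a structure `M`. -/
noncomputable def termModel {S : Signature} (M : Struc S) : Struc S :=
  (Struc.termData M).toStruc

/-! ### Auxiliary material for stmt7 -/

section TermModelIso

variable {T : Signature} (M : Struc T)

theorem Tm.eval_congr (t : Tm T) : ∀ ρ ρ' : ℕ → M.U,
    (∀ n ∈ t.fv, ρ n = ρ' n) → t.eval M ρ = t.eval M ρ' := by
  induction t with
  | var n => intro ρ ρ' h; exact h n (by simp [Tm.fv])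
  | func f ts ih =>
      intro ρ ρ' h
      simp only [Tm.eval]
      congr 1
      funext i
      refine ih i ρ ρ' fun n hn => h n ?_
      simp only [Tm.fv, Finset.mem_biUnion, Finset.mem_univ]
      exact ⟨i, trivial, hn⟩

theorem Tm.eval_closed (t : Tm T) (ht : t.fv = ∅) (ρ ρ' : ℕ → M.U) :
    t.eval M ρ = t.eval M ρ' := Tm.eval_congr M t ρ ρ' (by simp [ht])

variable (ρ₀ : ℕ → M.U)

noncomputable def tmVal (x : (termModel M).U) : M.U :=
  (Quotient.out (x : Quotient (Struc.termData M).setoid)).1.eval M ρ₀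

theorem tmVal_mk (t : ClosedTm T) :
    tmVal M ρ₀ (Quotient.mk (Struc.termData M).setoid t) = t.1.eval M ρ₀ := by
  have h := @Quotient.mk_out _ (Struc.termData M).setoid t
  exact h ρ₀

theorem tmVal_inj : Function.Injective (tmVal M ρ₀) := by
  intro x y h
  induction x using Quotient.inductionOn with | h t => ?_
  induction y using Quotient.inductionOn with | h u => ?_
  apply Quotient.sound
  intro ρ
  rw [Tm.eval_closed M t.1 t.2 ρ ρ₀, Tm.eval_closed M u.1 u.2 ρ ρ₀]
  rw [tmVal_mk, tmVal_mk] at h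
  exact h

theorem tmVal_interpF (f : T.Func) (args : Fin (T.arF f) → (termModel M).U) :
    tmVal M ρ₀ ((termModel M).interpF f args) =
      M.interpF f (fun i => tmVal M ρ₀ (args i)) :=
  tmVal_mk M ρ₀ (ClosedTm.func f (fun i => Quotient.out (args i)))

theorem tmVal_eval (t : Tm T) : ∀ ρ : ℕ → (termModel M).U,
    tmVal M ρ₀ (t.eval (termModel M) ρ) = t.eval M (fun n => tmVal M ρ₀ (ρ n)) := by
  induction t with
  | var n => intro ρ; rfl
  | func f ts ih =>
      intro ρ
      simp only [Tm.eval]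
      rw [tmVal_interpF]
      congr 1
      funext i
      exact ih i ρ

theorem tmMem_interpP (Q : T.Pred) (v : Fin (T.arP Q) → (termModel M).U) :
    v ∈ (termModel M).interpP Q ↔ (fun i => tmVal M ρ₀ (v i)) ∈ M.interpP Q := by
  constructor
  · rintro ⟨g, hg, hmem⟩
    have h : (fun i => tmVal M ρ₀ (v i)) = fun i => (g i).1.eval M ρ₀ := by
      funext i; rw [hg i]; exact tmVal_mk M ρ₀ (g i)
    rw [h]; exact hmem ρ₀
  · intro h
    refine ⟨fun i => Quotient.out (v i), fun i => (Quotient.out_eq (v i)).symm, ?_⟩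
    intro ρ
    have h2 : (fun i => (Quotient.out (v i)).1.eval M ρ) = fun i => tmVal M ρ₀ (v i) := by
      funext i; exact Tm.eval_closed M _ (Quotient.out (v i)).2 ρ ρ₀
    rw [h2]; exact h

theorem tmMem_interpI (v : (P : T.IndPred) × (Fin (T.arI P) → (termModel M).U)) :
    v ∈ (termModel M).interpI ↔
      (⟨v.1, fun i => tmVal M ρ₀ (v.2 i)⟩ :
        (P : T.IndPred) × (Fin (T.arI P) → M.U)) ∈ M.interpI := by
  constructor
  · rintro ⟨g, hg, hmem⟩
    have h : (fun i => tmVal M ρ₀ (v.2 i)) = fun i => (g i).1.eval M ρ₀ := by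
      funext i; rw [hg i]; exact tmVal_mk M ρ₀ (g i)
    rw [h]; exact hmem ρ₀
  · intro h
    refine ⟨fun i => Quotient.out (v.2 i), fun i => (Quotient.out_eq (v.2 i)).symm, ?_⟩
    intro ρ
    have h2 : (fun i => (Quotient.out (v.2 i)).1.eval M ρ) = fun i => tmVal M ρ₀ (v.2 i) := by
      funext i; exact Tm.eval_closed M _ (Quotient.out (v.2 i)).2 ρ ρ₀
    rw [h2]; exact h

theorem sigma_tmVal_inj (hval : Function.Injective (tmVal M ρ₀))
    {v w : (P : T.IndPred) × (Fin (T.arI P) → (termModel M).U)}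
    (h : (⟨v.1, fun i => tmVal M ρ₀ (v.2 i)⟩ :
        (P : T.IndPred) × (Fin (T.arI P) → M.U)) =
      ⟨w.1, fun i => tmVal M ρ₀ (w.2 i)⟩) : v = w := by
  obtain ⟨P, ts⟩ := v
  obtain ⟨Q, us⟩ := w
  obtain ⟨rfl, h2⟩ := Sigma.mk.inj_iff.mp h
  simp only [heq_eq_eq] at h2
  exact Sigma.mk.inj_iff.mpr ⟨rfl, heq_of_eq (funext fun i => hval (congrFun h2 i))⟩

def tmPb (Y : Set ((P : T.IndPred) × (Fin (T.arI P) → M.U))) :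
    Set ((P : T.IndPred) × (Fin (T.arI P) → (termModel M).U)) :=
  {v | (⟨v.1, fun i => tmVal M ρ₀ (v.2 i)⟩ :
    (P : T.IndPred) × (Fin (T.arI P) → M.U)) ∈ Y}

def tmPush (X : Set ((P : T.IndPred) × (Fin (T.arI P) → (termModel M).U))) :
    Set ((P : T.IndPred) × (Fin (T.arI P) → M.U)) :=
  {w | ∃ v ∈ X, w = ⟨v.1, fun i => tmVal M ρ₀ (v.2 i)⟩}

theorem tmPb_mono : Monotone (tmPb M ρ₀) := fun _ _ h _ hv => h hv

theorem tmPb_tmPush (hval : Function.Injective (tmVal M ρ₀))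
    (X : Set ((P : T.IndPred) × (Fin (T.arI P) → (termModel M).U))) :
    tmPb M ρ₀ (tmPush M ρ₀ X) = X := by
  ext v
  constructor
  · rintro ⟨w, hw, h⟩
    exact (sigma_tmVal_inj M ρ₀ hval h) ▸ hw
  · intro hv
    exact ⟨v, hv, rfl⟩

theorem tmPush_tmPb (hsurj : Function.Surjective (tmVal M ρ₀))
    (Y : Set ((P : T.IndPred) × (Fin (T.arI P) → M.U))) :
    tmPush M ρ₀ (tmPb M ρ₀ Y) = Y := by
  ext w
  constructor
  · rintro ⟨v, hv, rfl⟩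
    exact hv
  · intro hw
    choose g hg using fun i => hsurj (w.2 i)
    have h1 : (fun i => tmVal M ρ₀ (g i)) = w.2 := funext hg
    refine ⟨⟨w.1, g⟩, ?_, ?_⟩
    · show (⟨w.1, fun i => tmVal M ρ₀ (g i)⟩ :
        (P : T.IndPred) × (Fin (T.arI P) → M.U)) ∈ Y
      rw [h1]
      exact hw
    · show w = ⟨w.1, fun i => tmVal M ρ₀ (g i)⟩
      rw [h1]

theorem step_tmPb (hval : Function.Injective (tmVal M ρ₀))
    (hsurj : Function.Surjective (tmVal M ρ₀)) (Φ : List (ProdRule T))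
    (Y : Set ((P : T.IndPred) × (Fin (T.arI P) → M.U))) :
    step (termModel M) Φ (tmPb M ρ₀ Y) = tmPb M ρ₀ (step M Φ Y) := by
  ext v
  constructor
  · rintro ⟨r, hr, ρ, hq, hp, rfl⟩
    refine ⟨r, hr, fun n => tmVal M ρ₀ (ρ n), ?_, ?_, ?_⟩
    · intro q hq'
      have h1 : (fun i => (q.2 i).eval M (fun n => tmVal M ρ₀ (ρ n))) =
          fun i => tmVal M ρ₀ ((q.2 i).eval (termModel M) ρ) :=
        funext fun i => (tmVal_eval M ρ₀ (q.2 i) ρ).symm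
      rw [h1]
      exact (tmMem_interpP M ρ₀ q.1 _).mp (hq q hq')
    · intro p hp'
      have h1 : (fun i => (p.2 i).eval M (fun n => tmVal M ρ₀ (ρ n))) =
          fun i => tmVal M ρ₀ ((p.2 i).eval (termModel M) ρ) :=
        funext fun i => (tmVal_eval M ρ₀ (p.2 i) ρ).symm
      show (⟨p.1, fun i => (p.2 i).eval M (fun n => tmVal M ρ₀ (ρ n))⟩ :
        (P : T.IndPred) × (Fin (T.arI P) → M.U)) ∈ Y
      rw [h1]
      exact hp p hp'
    · exact (congrArg (fun g => (⟨r.concl, g⟩ :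
        (P : T.IndPred) × (Fin (T.arI P) → M.U)))
        (funext fun i => tmVal_eval M ρ₀ (r.conclArgs i) ρ))
  · rintro ⟨r, hr, ρ, hq, hp, hv⟩
    choose ρT hρT using fun n => hsurj (ρ n)
    have key : ∀ t : Tm T, tmVal M ρ₀ (t.eval (termModel M) ρT) = t.eval M ρ := by
      intro t
      rw [tmVal_eval]
      congr 1
      exact funext hρT
    refine ⟨r, hr, ρT, ?_, ?_, ?_⟩
    · intro q hq'
      rw [tmMem_interpP M ρ₀]
      have h1 : (fun i => tmVal M ρ₀ ((q.2 i).eval (termModel M) ρT)) =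
          fun i => (q.2 i).eval M ρ := funext fun i => key (q.2 i)
      rw [h1]
      exact hq q hq'
    · intro p hp'
      show (⟨p.1, fun i => tmVal M ρ₀ ((p.2 i).eval (termModel M) ρT)⟩ :
        (P : T.IndPred) × (Fin (T.arI P) → M.U)) ∈ Y
      have h1 : (fun i => tmVal M ρ₀ ((p.2 i).eval (termModel M) ρT)) =
          fun i => (p.2 i).eval M ρ := funext fun i => key (p.2 i)
      rw [h1]
      exact hp p hp'
    · apply sigma_tmVal_inj M ρ₀ hval
      rw [hv]
      exact (congrArg (fun g => (⟨r.concl, g⟩ :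
        (P : T.IndPred) × (Fin (T.arI P) → M.U)))
        (funext fun i => key (r.conclArgs i))).symm

end TermModelIso

/-- if `M` is a name-extended standard model for `(Σ_c, Φ)`, then its
term model `M_T` is a standard model for `(Σ_c, Φ)`: each inductive predicate in
`M_T` is interpreted as the least fixpoint of the operator for `Φ` over the term
universe. -/
theorem stmt7 {S : Signature} (Φ : List (ProdRule S)) (M : Struc S.addConsts)
    [Nonempty M.U] (hne : NameExtended M) (hstd : Standard M (Φ.map ProdRule.lift)) :
    Standard (termModel M) (Φ.map ProdRule.lift) := by
  classical
  have ρ₀ : ℕ → M.U := fun _ => Classical.arbitrary _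
  have hsurj : Function.Surjective (tmVal M ρ₀) := by
    intro u
    obtain ⟨n, hn⟩ := hne u
    refine ⟨Quotient.mk (Struc.termData M).setoid
      ⟨Tm.func (Sum.inr n) (fun i => i.elim0), by
        simp only [Tm.fv]
        exact Finset.eq_empty_of_forall_notMem (fun m hm => by
          obtain ⟨i, -, -⟩ := Finset.mem_biUnion.mp hm
          exact i.elim0)⟩, ?_⟩
    refine (tmVal_mk M ρ₀ _).trans ?_
    show M.interpF (Sum.inr n) _ = u
    rw [← hn]
    congr 1
    funext i
    exact i.elim0
  have hinj := tmVal_inj M ρ₀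
  set Φ' := Φ.map ProdRule.lift with hΦ'
  have hcomm := step_tmPb M ρ₀ hinj hsurj Φ'
  have hTfix : step (termModel M) Φ' (OrderHom.lfp (stepHom (termModel M) Φ')) =
      OrderHom.lfp (stepHom (termModel M) Φ') := by
    exact OrderHom.map_lfp (stepHom (termModel M) Φ')
  have hMfix : step M Φ' (OrderHom.lfp (stepHom M Φ')) =
      OrderHom.lfp (stepHom M Φ') := by
    exact OrderHom.map_lfp (stepHom M Φ')
  have h1 : OrderHom.lfp (stepHom (termModel M) Φ') ≤
      tmPb M ρ₀ (OrderHom.lfp (stepHom M Φ')) := by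
    apply OrderHom.lfp_le
    show step (termModel M) Φ' (tmPb M ρ₀ (OrderHom.lfp (stepHom M Φ'))) ≤ _
    rw [hcomm, hMfix]
  have hfix : step M Φ' (tmPush M ρ₀ (OrderHom.lfp (stepHom (termModel M) Φ'))) =
      tmPush M ρ₀ (OrderHom.lfp (stepHom (termModel M) Φ')) := by
    have h := hcomm (tmPush M ρ₀ (OrderHom.lfp (stepHom (termModel M) Φ')))
    rw [tmPb_tmPush M ρ₀ hinj, hTfix] at h
    have h3 := congrArg (tmPush M ρ₀) h
    rw [tmPush_tmPb M ρ₀ hsurj] at h3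
    exact h3.symm
  have h2 : tmPb M ρ₀ (OrderHom.lfp (stepHom M Φ')) ≤
      OrderHom.lfp (stepHom (termModel M) Φ') := by
    have hle : OrderHom.lfp (stepHom M Φ') ≤
        tmPush M ρ₀ (OrderHom.lfp (stepHom (termModel M) Φ')) := by
      apply OrderHom.lfp_le
      show step M Φ' (tmPush M ρ₀ (OrderHom.lfp (stepHom (termModel M) Φ'))) ≤ _
      exact le_of_eq hfix
    calc tmPb M ρ₀ (OrderHom.lfp (stepHom M Φ'))
        ≤ tmPb M ρ₀ (tmPush M ρ₀ (OrderHom.lfp (stepHom (termModel M) Φ'))) :=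
          tmPb_mono M ρ₀ hle
      _ = OrderHom.lfp (stepHom (termModel M) Φ') := tmPb_tmPush M ρ₀ hinj _
  have hI : (termModel M).interpI = tmPb M ρ₀ M.interpI :=
    Set.ext fun v => tmMem_interpI M ρ₀ v
  show (termModel M).interpI = OrderHom.lfp (stepHom (termModel M) Φ')
  rw [hI, show M.interpI = OrderHom.lfp (stepHom M Φ') from hstd]
  exact le_antisymm h2 h1
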